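/- Let A₀ be a densely defined skew-symmetric operator on a complex Hilbert space H, let A := (-A₀)*, and let (H₊, H₋, G₊, G₋) be a boundary quadruple for A₀. Then the closure of A₀ (its smallest closed extension, which exists since A₀ is densely defined and skew-symmetric) has domain D(closure(A₀)) = ker G₊ ∩ ker G₋, and closure(A₀)ψ = Aψ for all ψ ∈ D(closure(A₀)). -/

import Mathlib

open scoped ComplexInnerProductSpace

private lemma skew_polar' {H : Type*} [NormedAddCommGroup H] [InnerProductSpace ℂ H]
    (A₀dom : Submodule ℂ H) (A₀ : H →ₗ[ℂ] H)
    (hRe0 : ∀ ψ ∈ A₀dom, ⟪A₀ ψ, ψ⟫ + ⟪ψ, A₀ ψ⟫ = 0) :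
    ∀ ψ ∈ A₀dom, ∀ φ ∈ A₀dom, ⟪A₀ ψ, φ⟫ + ⟪ψ, A₀ φ⟫ = 0 := by
  intro ψ hψ φ hφ
  have h1 := hRe0 (ψ + φ) (add_mem hψ hφ)
  have h2 := hRe0 (ψ + Complex.I • φ) (add_mem hψ (Submodule.smul_mem _ _ hφ))
  have hψψ := hRe0 ψ hψ
  have hφφ := hRe0 φ hφ
  simp only [map_add, map_smul, inner_add_left, inner_add_right, inner_smul_left,
    inner_smul_right, Complex.conj_I] at h1 h2
  linear_combination (1/2 : ℂ) * h1 - (Complex.I/2) * h2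
    + ((Complex.I - 1)/2) * hψψ + ((Complex.I - 1)/2) * hφφ
    + ((⟪A₀ ψ, φ⟫ + ⟪ψ, A₀ φ⟫ - ⟪A₀ φ, ψ⟫ - ⟪φ, A₀ ψ⟫
        - Complex.I * (⟪A₀ φ, φ⟫ + ⟪φ, A₀ φ⟫))/2) * Complex.I_sq

private lemma dense_inner_zero' {H : Type*} [NormedAddCommGroup H] [InnerProductSpace ℂ H]
    (A₀dom : Submodule ℂ H) (hdense : Dense (A₀dom : Set H))
    (z : H) (hz : ∀ φ ∈ A₀dom, ⟪z, φ⟫ = 0) : z = 0 := by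
  have hcl : IsClosed {w : H | ⟪z, w⟫ = 0} :=
    isClosed_eq (continuous_const.inner continuous_id) continuous_const
  have hsub : (A₀dom : Set H) ⊆ {w : H | ⟪z, w⟫ = 0} := fun w hw => hz w hw
  have h2 : closure (A₀dom : Set H) ⊆ {w : H | ⟪z, w⟫ = 0} := hcl.closure_subset_iff.mpr hsub
  rw [hdense.closure_eq] at h2
  exact inner_self_eq_zero.mp (h2 (Set.mem_univ z))

theorem stmt_3
    {H Hp Hm : Type*}
    [NormedAddCommGroup H] [InnerProductSpace ℂ H] [CompleteSpace H]
    [NormedAddCommGroup Hp] [InnerProductSpace ℂ Hp] [CompleteSpace Hp]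
    [NormedAddCommGroup Hm] [InnerProductSpace ℂ Hm] [CompleteSpace Hm]
    (A₀dom : Submodule ℂ H) (A₀ : H →ₗ[ℂ] H)
    (hdense : Dense (A₀dom : Set H))
    (hskew₁ : ∀ ψ ∈ A₀dom, (⟪A₀ ψ, ψ⟫).re ≤ 0)
    (hskew₂ : ∀ ψ ∈ A₀dom, (⟪-(A₀ ψ), ψ⟫).re ≤ 0)
    (Adom : Submodule ℂ H) (A : H →ₗ[ℂ] H)
    (hAdom : ∀ x : H, x ∈ Adom ↔ ∃ η : H, ∀ φ ∈ A₀dom, ⟪x, -(A₀ φ)⟫ = ⟪η, φ⟫)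
    (hAval : ∀ x ∈ Adom, ∀ φ ∈ A₀dom, ⟪x, -(A₀ φ)⟫ = ⟪A x, φ⟫)
    (Gp : H →ₗ[ℂ] Hp) (Gm : H →ₗ[ℂ] Hm)
    (hGreen : ∀ ψ ∈ Adom, ∀ φ ∈ Adom,
      ⟪A ψ, φ⟫ + ⟪ψ, A φ⟫ = ⟪Gp ψ, Gp φ⟫ - ⟪Gm ψ, Gm φ⟫)
    (hSurj : ∀ (ξ : Hp) (ζ : Hm), ∃ ψ ∈ Adom, Gp ψ = ξ ∧ Gm ψ = ζ) :
    (∀ x : H,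
        (∃ y : H, (x, y) ∈ closure {p : H × H | p.1 ∈ A₀dom ∧ p.2 = A₀ p.1}) ↔
          (x ∈ Adom ∧ Gp x = 0 ∧ Gm x = 0)) ∧
    (∀ x y : H, (x, y) ∈ closure {p : H × H | p.1 ∈ A₀dom ∧ p.2 = A₀ p.1} → y = A x) := by
  classical
  -- Re⟪A₀ψ,ψ⟫ = 0
  have hRe0 : ∀ ψ ∈ A₀dom, ⟪A₀ ψ, ψ⟫ + ⟪ψ, A₀ ψ⟫ = 0 := by
    intro ψ hψ
    have h1 := hskew₁ ψ hψ
    have h2 := hskew₂ ψ hψ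
    rw [inner_neg_left] at h2
    have hre : (⟪A₀ ψ, ψ⟫).re = 0 := by
      have : (0:ℝ) ≤ (⟪A₀ ψ, ψ⟫).re := by
        have := h2; simp only [Complex.neg_re, neg_nonpos] at this; exact this
      linarith
    have hc : ⟪ψ, A₀ ψ⟫ = (starRingEnd ℂ) ⟪A₀ ψ, ψ⟫ := (inner_conj_symm _ _).symm
    rw [hc, Complex.add_conj, hre]
    norm_num
  have hskewB := skew_polar' A₀dom A₀ hRe0
  have horth : ∀ z : H, (∀ φ ∈ A₀dom, ⟪z, φ⟫ = 0) → z = 0 :=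
    dense_inner_zero' A₀dom hdense
  -- A extends A₀
  have hmemA : ∀ ψ ∈ A₀dom, ψ ∈ Adom := by
    intro ψ hψ
    rw [hAdom]
    refine ⟨A₀ ψ, fun φ hφ => ?_⟩
    have h := hskewB ψ hψ φ hφ
    rw [inner_neg_right]
    linear_combination -h
  have hvalA : ∀ ψ ∈ A₀dom, A ψ = A₀ ψ := by
    intro ψ hψ
    have hz : ∀ φ ∈ A₀dom, ⟪A ψ - A₀ ψ, φ⟫ = 0 := by
      intro φ hφ
      rw [inner_sub_left]
      have h1 := hAval ψ (hmemA ψ hψ) φ hφ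
      have h2 := hskewB ψ hψ φ hφ
      rw [inner_neg_right] at h1
      linear_combination -h1 - h2
    exact sub_eq_zero.mp (horth _ hz)
  -- setup WithLp
  set S : Set (H × H) := {p : H × H | p.1 ∈ A₀dom ∧ p.2 = A₀ p.1} with hS
  let E := WithLp 2 (H × H)
  let e : E ≃L[ℂ] H × H := WithLp.prodContinuousLinearEquiv 2 ℂ H H
  let P₀ : Submodule ℂ (H × H) :=
    { carrier := S
      add_mem' := by
        rintro p q ⟨h1,h2⟩ ⟨h3,h4⟩
        exact ⟨add_mem h1 h3, by show p.2 + q.2 = A₀ (p.1 + q.1); rw [map_add, h2, h4]⟩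
      zero_mem' := ⟨zero_mem _, by simp⟩
      smul_mem' := by
        rintro r p ⟨h1,h2⟩
        exact ⟨Submodule.smul_mem _ _ h1, by show r • p.2 = A₀ (r • p.1); rw [map_smul, h2]⟩ }
  let P : Submodule ℂ E := P₀.map (e.symm.toLinearEquiv : (H × H) →ₗ[ℂ] E)
  have hPset : (P : Set E) = ⇑e ⁻¹' S := by
    ext p
    constructor
    · rintro ⟨q, hq, rfl⟩
      have hq' : q ∈ S := hq
      simpa using hq'
    · intro hp
      exact ⟨e p, hp, e.symm_apply_apply p⟩
  have hclos : closure (P : Set E) = ⇑e ⁻¹' (closure S) := by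
    rw [hPset]
    exact (e.toHomeomorph.preimage_closure S).symm
  -- orthogonal complement of P
  have hPbot : ∀ w : E, w ∈ Pᗮ ↔ ((e w).2 ∈ Adom ∧ (e w).1 = A ((e w).2)) := by
    intro w
    rw [Submodule.mem_orthogonal]
    constructor
    · intro hw
      have key : ∀ ψ ∈ A₀dom, ⟪ψ, (e w).1⟫ + ⟪A₀ ψ, (e w).2⟫ = 0 := by
        intro ψ hψ
        have hm : (e.symm (ψ, A₀ ψ) : E) ∈ P := ⟨(ψ, A₀ ψ), ⟨hψ, rfl⟩, rfl⟩
        have := hw _ hm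
        exact this
      have h2 : ∀ ψ ∈ A₀dom, ⟪(e w).2, -(A₀ ψ)⟫ = ⟪(e w).1, ψ⟫ := by
        intro ψ hψ
        have hc := congrArg (starRingEnd ℂ) (key ψ hψ)
        simp only [map_add, inner_conj_symm, map_zero] at hc
        rw [inner_neg_right]
        linear_combination -hc
      have hw2 : (e w).2 ∈ Adom := (hAdom _).mpr ⟨(e w).1, h2⟩
      refine ⟨hw2, ?_⟩
      have hz : ∀ φ ∈ A₀dom, ⟪(e w).1 - A ((e w).2), φ⟫ = 0 := by
        intro φ hφ
        rw [inner_sub_left]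
        have ha := hAval _ hw2 φ hφ
        have hb := h2 φ hφ
        linear_combination ha - hb
      exact sub_eq_zero.mp (horth _ hz)
    · rintro ⟨hw2, hw1⟩
      rintro u ⟨q, ⟨hq1, hq2⟩, rfl⟩
      have ha := hAval _ hw2 q.1 hq1
      rw [inner_neg_right] at ha
      have hc := congrArg (starRingEnd ℂ) ha
      simp only [map_neg, inner_conj_symm] at hc
      -- hc : -⟪A₀ q.1, (e w).2⟫ = ⟪q.1, A ((e w).2)⟫   (after conj)
      have : (⟪q.1, (e w).1⟫ : ℂ) + ⟪q.2, (e w).2⟫ = 0 := by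
        rw [hw1, hq2]
        linear_combination -hc
      exact this
  -- membership in the closure of P
  have hmem : ∀ p : E, p ∈ closure (P : Set E) ↔
      ∀ v ∈ Adom, ⟪A v, (e p).1⟫ + ⟪v, (e p).2⟫ = 0 := by
    intro p
    have hcc : closure (P : Set E) = (Pᗮᗮ : Set E) := by
      rw [Submodule.orthogonal_orthogonal_eq_closure, Submodule.topologicalClosure_coe]
    rw [hcc]
    rw [SetLike.mem_coe, Submodule.mem_orthogonal]
    constructor
    · intro h v hv
      have hw : (e.symm (A v, v) : E) ∈ Pᗮ := by
        rw [hPbot]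
        simp [hv]
      have := h _ hw
      exact this
    · intro h w hw
      obtain ⟨hw2, hw1⟩ := (hPbot w).mp hw
      have hv := h _ hw2
      have : (⟪(e w).1, (e p).1⟫ : ℂ) + ⟪(e w).2, (e p).2⟫ = 0 := by
        rw [hw1]; exact hv
      exact this
  -- translation to closure S
  have hmemS : ∀ q : H × H, q ∈ closure S ↔
      ∀ v ∈ Adom, ⟪A v, q.1⟫ + ⟪v, q.2⟫ = 0 := by
    intro q
    have h1 : (e.symm q : E) ∈ closure (P : Set E) ↔ q ∈ closure S := by
      rw [hclos]
      simp [Set.mem_preimage]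
    rw [← h1, hmem]
    simp only [e.apply_symm_apply]
  -- forward extraction
  have hfwd : ∀ x y : H, (x, y) ∈ closure S → x ∈ Adom ∧ A x = y := by
    intro x y hy
    have hkey := (hmemS (x, y)).mp hy
    have h2 : ∀ φ ∈ A₀dom, ⟪x, -(A₀ φ)⟫ = ⟪y, φ⟫ := by
      intro φ hφ
      have h := hkey φ (hmemA φ hφ)
      rw [hvalA φ hφ] at h
      have hc := congrArg (starRingEnd ℂ) h
      simp only [map_add, inner_conj_symm, map_zero] at hc
      rw [inner_neg_right]
      linear_combination -hc
    have hx : x ∈ Adom := (hAdom _).mpr ⟨y, h2⟩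
    refine ⟨hx, ?_⟩
    have hz : ∀ φ ∈ A₀dom, ⟪A x - y, φ⟫ = 0 := by
      intro φ hφ
      rw [inner_sub_left]
      have ha := hAval _ hx φ hφ
      have hb := h2 φ hφ
      linear_combination hb - ha
    exact sub_eq_zero.mp (horth _ hz)
  have hbdry : ∀ x y : H, (x, y) ∈ closure S → Gp x = 0 ∧ Gm x = 0 := by
    intro x y hy
    obtain ⟨hx, hAx⟩ := hfwd x y hy
    have hkey := (hmemS (x, y)).mp hy
    have hg : ∀ v ∈ Adom, (⟪Gp x, Gp v⟫ : ℂ) - ⟪Gm x, Gm v⟫ = 0 := by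
      intro v hv
      have h := hkey v hv
      rw [← hAx] at h
      have hc := congrArg (starRingEnd ℂ) h
      simp only [map_add, inner_conj_symm, map_zero] at hc
      -- hc : ⟪x, A v⟫ + ⟪A x, v⟫ = 0
      have hgreen := hGreen x hx v hv
      rw [← hgreen]
      linear_combination hc
    constructor
    · obtain ⟨v, hv, hv1, hv2⟩ := hSurj (Gp x) 0
      have := hg v hv
      rw [hv1, hv2, inner_zero_right] at this
      have : (⟪Gp x, Gp x⟫ : ℂ) = 0 := by linear_combination this
      exact inner_self_eq_zero.mp this
    · obtain ⟨v, hv, hv1, hv2⟩ := hSurj 0 (Gm x)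
      have := hg v hv
      rw [hv1, hv2, inner_zero_right] at this
      have : (⟪Gm x, Gm x⟫ : ℂ) = 0 := by linear_combination -this
      exact inner_self_eq_zero.mp this
  refine ⟨fun x => ⟨?_, ?_⟩, fun x y hy => ((hfwd x y hy).2).symm⟩
  · rintro ⟨y, hy⟩
    exact ⟨(hfwd x y hy).1, hbdry x y hy⟩
  · rintro ⟨hx, hgp, hgm⟩
    refine ⟨A x, ?_⟩
    rw [hmemS]
    intro v hv
    have hg := hGreen v hv x hx
    rw [hgp, hgm] at hg
    simpa using hg
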